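/- If F is given by a family of compactly supported tensors K^{g₁} = g₁^* K̃ with ∑_{g₁∈G} (g₁^* K̃) s = 0 for all sections s, then F s = ∑_{g₁} dg₁ ⊗ (g₁^*)^{-1}(K^{g₁} s) defines an Ω_c(B⋊G)-linear map; in particular K̃ = dχ works, where χ satisfies ∑_g g^*χ = 1. -/

import Mathlib

open scoped BigOperators

lemma tensor_family_aux
    {M G V : Type*} [Group G] [DecidableEq G] [AddCommGroup V] [Module ℂ V]
    (act : M → G → M)
    (hact : ∀ (p : M) (g g' : G), act (act p g) g' = act p (g * g'))
    (hact1 : ∀ p : M, act p 1 = p)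
    (ρ : G →* Module.End ℂ V)
    (pull : G → (M → ℂ) → (M → ℂ))
    (hpull : ∀ (g : G) (f : M → ℂ), pull g f = fun p => f (act p g))
    (gactS : G → (M → V) → (M → V))
    (hgactS : ∀ (g : G) (s : M → V), gactS g s = fun p => ρ g (s (act p g)))
    (νS : (M → ℂ) → G → (M → V) → (M → V))
    (hνS : ∀ (f : M → ℂ) (g : G) (s : M → V), νS f g s = fun p => f p • gactS g s p)
    (νΩ : (M → ℂ) → G → (G → M → V) → (G → M → V))
    (hνΩ : ∀ (f : M → ℂ) (g : G) (w : G → M → V), νΩ f g w = fun h =>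
      if h = 1 then 0
      else (fun p => pull h⁻¹ f p • w (g⁻¹ * h) p)
        - (if h = g then (fun p => pull g⁻¹ f p • ∑ᶠ g₁ : G, gactS g₁ (w g₁) p) else 0))
    (Kt : (M → V) → (M → V))
    (hKlin : ∀ (f : M → ℂ) (s : M → V), Kt (fun p => f p • s p) = fun p => f p • Kt s p)
    (C : Set M)
    (hKsupp : ∀ (s : M → V) (p : M), p ∉ C → Kt s p = 0)
    (hCfin : ∀ p : M, {g : G | act p g ∈ C}.Finite)
    (hzero : ∀ (s : M → V) (p : M), ∑ᶠ g₁ : G, gactS g₁ (Kt (gactS g₁⁻¹ s)) p = 0)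
    (f : M → ℂ) (g : G) (u : M → V) :
    νΩ f g (fun h => if h = 1 then 0 else Kt (gactS h⁻¹ u))
      = fun h => if h = 1 then 0 else Kt (gactS h⁻¹ (νS f g u)) := by
  have key : ∀ h : G, gactS h⁻¹ (νS f g u)
      = fun p => pull h⁻¹ f p • gactS (h⁻¹ * g) u p := by
    intro h
    funext p
    rw [hgactS, hνS, hgactS, hgactS, hpull]
    simp only
    rw [map_smul, hact, map_mul]
    rfl
  have g1 : ∀ s : M → V, gactS 1 s = s := by
    intro s; funext p; rw [hgactS]; simp [hact1]
  rw [hνΩ]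
  funext h
  by_cases h1 : h = 1
  · simp [h1]
  simp only [if_neg h1]
  by_cases hg : h = g
  · subst hg
    have hw1 : (h⁻¹ * h : G) = 1 := inv_mul_cancel h
    have hrhs : Kt (gactS h⁻¹ (νS f h u)) = fun p => pull h⁻¹ f p • Kt u p := by
      rw [key h, hw1, g1, hKlin]
    rw [hrhs]
    funext p
    -- the finsum computation
    have Tdef : ∀ g₁ : G, gactS g₁ (Kt (gactS g₁⁻¹ u)) p
        = ρ g₁ (Kt (gactS g₁⁻¹ u) (act p g₁)) := by
      intro g₁; rw [hgactS]
    have hTsupp : (Function.support fun g₁ : G =>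
        gactS g₁ (Kt (gactS g₁⁻¹ u)) p) ⊆ {g₁ : G | act p g₁ ∈ C} := by
      intro g₁ hg₁
      by_contra hc
      apply hg₁
      show gactS g₁ (Kt (gactS g₁⁻¹ u)) p = 0
      rw [Tdef, hKsupp _ _ hc, map_zero]
    have hTfin : (Function.support fun g₁ : G =>
        gactS g₁ (Kt (gactS g₁⁻¹ u)) p).Finite := (hCfin p).subset hTsupp
    have hS10 : gactS (1 : G) ((if (1 : G) = 1 then 0 else Kt (gactS (1 : G)⁻¹ u)) : M → V) p
        = 0 := by
      rw [if_pos rfl, hgactS]; simp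
    have hsplit : (fun g₁ : G => gactS g₁ (Kt (gactS g₁⁻¹ u)) p)
        = (fun g₁ : G => gactS g₁ ((if g₁ = 1 then 0 else Kt (gactS g₁⁻¹ u)) : M → V) p)
          + fun g₁ : G => if g₁ = 1 then Kt u p else 0 := by
      funext g₁
      show gactS g₁ (Kt (gactS g₁⁻¹ u)) p
        = gactS g₁ ((if g₁ = 1 then 0 else Kt (gactS g₁⁻¹ u)) : M → V) p
          + (if g₁ = 1 then Kt u p else 0)
      by_cases hg₁ : g₁ = 1
      · subst hg₁
        rw [hS10, if_pos rfl, zero_add, inv_one, g1, hgactS]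
        simp [hact1]
      · rw [if_neg hg₁, if_neg hg₁, add_zero]
    have hSfin : (Function.support fun g₁ : G =>
        gactS g₁ ((if g₁ = 1 then 0 else Kt (gactS g₁⁻¹ u)) : M → V) p).Finite := by
      apply hTfin.subset
      intro g₁ hg₁
      by_cases hg₁1 : g₁ = 1
      · exact absurd (hg₁1 ▸ hS10) hg₁
      · rw [Function.mem_support] at hg₁ ⊢
        simpa [hg₁1] using hg₁
    have hPfin : (Function.support fun g₁ : G =>
        (if g₁ = 1 then Kt u p else 0 : V)).Finite := by
      apply Set.Finite.subset (Set.finite_singleton (1 : G))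
      intro g₁ hg₁
      rw [Set.mem_singleton_iff]
      by_contra hc
      exact hg₁ (if_neg hc)
    have hsum : (∑ᶠ g₁ : G, gactS g₁
          ((if g₁ = 1 then 0 else Kt (gactS g₁⁻¹ u)) : M → V) p) + Kt u p = 0 := by
      calc (∑ᶠ g₁ : G, gactS g₁
              ((if g₁ = 1 then 0 else Kt (gactS g₁⁻¹ u)) : M → V) p) + Kt u p
          = (∑ᶠ g₁ : G, gactS g₁
              ((if g₁ = 1 then 0 else Kt (gactS g₁⁻¹ u)) : M → V) p)
            + ∑ᶠ g₁ : G, (if g₁ = 1 then Kt u p else 0 : V) := by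
            congr 1
            rw [finsum_eq_single _ (1 : G) (fun x hx => if_neg hx), if_pos rfl]
        _ = ∑ᶠ g₁ : G, gactS g₁ (Kt (gactS g₁⁻¹ u)) p := by
            rw [← finsum_add_distrib hSfin hPfin]
            exact (congrArg _ hsplit).symm
        _ = 0 := hzero u p
    have hval : (∑ᶠ g₁ : G, gactS g₁
        ((if g₁ = 1 then 0 else Kt (gactS g₁⁻¹ u)) : M → V) p) = - Kt u p :=
      eq_neg_of_add_eq_zero_left hsum
    simp only [Pi.sub_apply, if_pos rfl, hw1, Pi.zero_apply, eq_self_iff_true,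
      if_true, smul_zero, zero_sub]
    rw [hval]
    simp
  · have hgh : (g⁻¹ * h : G) ≠ 1 := fun hc => hg (inv_mul_eq_one.mp hc).symm
    have hinv : ((g⁻¹ * h : G))⁻¹ = h⁻¹ * g := by group
    simp only [if_neg hg, if_neg hgh, sub_zero]
    rw [key h, hKlin]
    funext p
    simp only [hinv]

/-- **Compactly supported tensor families with vanishing sum give
`Ω_c(B⋊G)`-linear maps.**  If `K̃` is a compactly supported tensor (a bundle
endomorphism, i.e. `C^∞`-linear and supported in a set `C` meeting only finitely
many translates of each orbit) and `∑_{g₁∈G} (g₁^* K̃) s = 0` for all sections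
`s` (where `(g^*A)(s) = g^*(A((g⁻¹)^* s))`), then
`F s = ∑_{g₁} dg₁ ⊗ (g₁^*)⁻¹((g₁^* K̃) s)` commutes with the representation
`ν(f·g)` of `C*_c(B⋊G)` on `Ω_e^•(E_♭⋊G)`, i.e. is `Ω_c(B⋊G)`-linear; in
particular `K̃ = dχ` works when `∑_g g^*χ = 1` (so that `∑_g g^*(dχ) = 0`). -/
theorem tensor_family_omega_linear
    {M G V : Type*} [Group G] [DecidableEq G] [AddCommGroup V] [Module ℂ V]
    (act : M → G → M)
    (hact : ∀ (p : M) (g g' : G), act (act p g) g' = act p (g * g'))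
    (hact1 : ∀ p : M, act p 1 = p)
    (ρ : G →* Module.End ℂ V)
    (pull : G → (M → ℂ) → (M → ℂ))
    (hpull : ∀ (g : G) (f : M → ℂ), pull g f = fun p => f (act p g))
    (gactS : G → (M → V) → (M → V))
    (hgactS : ∀ (g : G) (s : M → V), gactS g s = fun p => ρ g (s (act p g)))
    -- vector representation of `f·g` on sections and on degree-one elements
    (νS : (M → ℂ) → G → (M → V) → (M → V))
    (hνS : ∀ (f : M → ℂ) (g : G) (s : M → V), νS f g s = fun p => f p • gactS g s p)
    (νΩ : (M → ℂ) → G → (G → M → V) → (G → M → V))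
    (hνΩ : ∀ (f : M → ℂ) (g : G) (w : G → M → V), νΩ f g w = fun h =>
      if h = 1 then 0
      else (fun p => pull h⁻¹ f p • w (g⁻¹ * h) p)
        - (if h = g then (fun p => pull g⁻¹ f p • ∑ᶠ g₁ : G, gactS g₁ (w g₁) p) else 0))
    -- the tensor `K̃`: `C^∞(M)`-linear and compactly supported
    (Kt : (M → V) → (M → V))
    (hKadd : ∀ s₁ s₂ : M → V, Kt (s₁ + s₂) = Kt s₁ + Kt s₂)
    (hKlin : ∀ (f : M → ℂ) (s : M → V), Kt (fun p => f p • s p) = fun p => f p • Kt s p)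
    (C : Set M)
    (hKsupp : ∀ (s : M → V) (p : M), p ∉ C → Kt s p = 0)
    (hCfin : ∀ p : M, {g : G | act p g ∈ C}.Finite)
    -- the vanishing condition `∑_{g₁∈G} (g₁^* K̃) s = 0`
    (hzero : ∀ (s : M → V) (p : M), ∑ᶠ g₁ : G, gactS g₁ (Kt (gactS g₁⁻¹ s)) p = 0)
    -- the operator `F s = ∑_{g₁} dg₁ ⊗ K̃((g₁⁻¹)^* s)` (with `de = 0`)
    (F : (M → V) → (G → M → V))
    (hF : ∀ s : M → V, F s = fun h => if h = 1 then 0 else Kt (gactS h⁻¹ s)) :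
    -- `F` is `Ω_c(B⋊G)`-linear
    (∀ (f : M → ℂ) (g : G) (u : M → V), νΩ f g (F u) = F (νS f g u)) ∧
    -- in particular `K̃ = dχ` works, since `∑_g g^*χ = 1` forces `∑_g g^*(dχ) = 0`
    (∀ dχ : M → ℂ, (∀ p : M, ∑ᶠ g : G, dχ (act p g) = 0) →
      (∀ p : M, (Function.support fun g : G => dχ (act p g)).Finite) →
      ∀ (f : M → ℂ) (g : G) (u : M → V),
        νΩ f g (fun h => if h = 1 then 0 else fun p => dχ p • gactS h⁻¹ u p)
          = fun h => if h = 1 then 0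
              else fun p => dχ p • gactS h⁻¹ (νS f g u) p) := by
  
  constructor
  · intro f g u
    rw [hF u, hF (νS f g u)]
    exact tensor_family_aux act hact hact1 ρ pull hpull gactS hgactS νS hνS νΩ hνΩ
      Kt hKlin C hKsupp hCfin hzero f g u
  · intro dχ hχ0 hχfin f g u
    have hterm : ∀ (s : M → V) (p : M) (g₁ : G),
        gactS g₁ (fun q => dχ q • gactS g₁⁻¹ s q) p = dχ (act p g₁) • s p := by
      intro s p g₁
      rw [hgactS]
      simp only
      rw [map_smul]
      congr 1
      rw [hgactS]
      simp only
      rw [hact, mul_inv_cancel, hact1, ← Module.End.mul_apply, ← map_mul,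
        mul_inv_cancel, map_one, Module.End.one_apply]
    exact tensor_family_aux act hact hact1 ρ pull hpull gactS hgactS νS hνS νΩ hνΩ
      (fun s => fun p => dχ p • s p)
      (by
        intro f' s
        funext p
        exact smul_comm _ _ _)
      (Function.support dχ)
      (by
        intro s p hp
        show dχ p • s p = 0
        rw [Function.notMem_support.mp hp, zero_smul])
      (fun p => hχfin p)
      (by
        intro s p
        show ∑ᶠ g₁ : G, gactS g₁ (fun q => dχ q • gactS g₁⁻¹ s q) p = 0
        have : (fun g₁ : G => gactS g₁ (fun q => dχ q • gactS g₁⁻¹ s q) p)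
            = fun g₁ : G => dχ (act p g₁) • s p := by
          funext g₁; exact hterm s p g₁
        rw [this, ← finsum_smul, hχ0 p, zero_smul])
      f g u
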